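/- Assume 𝕀 ≠ ∅ and that δ₁(w_i) = δ₂(w_i) = deg(w_i) + 1 for every i ∈ 𝕀. Then S′∖S = {w_i : i ∈ 𝕀}; in particular the cardinality of S′∖S equals the cardinality of 𝕀 and is at most d − k. -/
import Mathlib


namespace ProjMonomialCurve

/-- The numerical semigroup generated by `a 1, …, a k` (equivalently by `A₁ = {0,a 1,…,a k}`). -/
def S1 (k : ℕ) (a : ℕ → ℕ) : Set ℕ :=
  {n | ∃ x : ℕ → ℕ, n = ∑ i ∈ Finset.Icc 1 k, x i * a i}

/-- The numerical semigroup generated by the nonzero elements `d - a i` (`0 ≤ i ≤ k-1`)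
of `A₂`, where `d = a k`. -/
def S2 (k : ℕ) (a : ℕ → ℕ) : Set ℕ :=
  {n | ∃ x : ℕ → ℕ, n = ∑ i ∈ Finset.range k, x i * (a k - a i)}

/-- `δ₁ n`: least total number of summands over representations `n = ∑ xᵢ aᵢ`. -/
noncomputable def delta1 (k : ℕ) (a : ℕ → ℕ) (n : ℕ) : ℕ :=
  sInf {m | ∃ x : ℕ → ℕ, n = ∑ i ∈ Finset.Icc 1 k, x i * a i ∧ m = ∑ i ∈ Finset.Icc 1 k, x i}

/-- `δ₂ n`: least total number of summands over representations of `n` by the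
nonzero elements of `A₂`. -/
noncomputable def delta2 (k : ℕ) (a : ℕ → ℕ) (n : ℕ) : ℕ :=
  sInf {m | ∃ x : ℕ → ℕ,
    n = ∑ i ∈ Finset.range k, x i * (a k - a i) ∧ m = ∑ i ∈ Finset.range k, x i}

/-- `ω₁ i`: the least element of `S₍₁₎` congruent to `i` modulo `d = a k`. -/
noncomputable def omega1 (k : ℕ) (a : ℕ → ℕ) (i : ℕ) : ℕ :=
  sInf {n | n ∈ S1 k a ∧ n % a k = i % a k}

/-- `ω₂ i`: the least element of `S₍₂₎` congruent to `i` modulo `d = a k`. -/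
noncomputable def omega2 (k : ℕ) (a : ℕ → ℕ) (i : ℕ) : ℕ :=
  sInf {n | n ∈ S2 k a ∧ n % a k = i % a k}

/-- `w i = (ω₁(i), ω₂(d-i))`. -/
noncomputable def w (k : ℕ) (a : ℕ → ℕ) (i : ℕ) : ℕ × ℕ :=
  (omega1 k a i, omega2 k a (a k - i))

/-- `e h = (h, d - h)`. -/
def e (k : ℕ) (a : ℕ → ℕ) (h : ℕ) : ℕ × ℕ := (h, a k - h)

/-- The affine semigroup `S ⊆ ℕ²` generated by `e (a 0), …, e (a k)`. -/
def S (k : ℕ) (a : ℕ → ℕ) : Set (ℕ × ℕ) :=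
  {u | ∃ x : ℕ → ℕ, u = ∑ i ∈ Finset.range (k+1), x i • e k a (a i)}

/-- `S' = {u ∈ ℕ² | u + p•e₀ ∈ S and u + p•e_d ∈ S for some p ∈ ℕ}`. -/
def S' (k : ℕ) (a : ℕ → ℕ) : Set (ℕ × ℕ) :=
  {u | ∃ p : ℕ, u + p • e k a 0 ∈ S k a ∧ u + p • e k a (a k) ∈ S k a}

/-- `deg u = (u₁ + u₂)/d` for `u ∈ ℕ²`. -/
def deg (k : ℕ) (a : ℕ → ℕ) (u : ℕ × ℕ) : ℕ := (u.1 + u.2) / a k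

/-- The index set `𝕀`. -/
noncomputable def II (k : ℕ) (a : ℕ → ℕ) : Set ℕ :=
  {i | 1 ≤ i ∧ i ≤ a k - 1 ∧ (∀ j, 1 ≤ j → j ≤ k - 1 → i ≠ a j) ∧
    deg k a (w k a i) < delta1 k a (w k a i).1}

/-- `T = {u ∈ ℤ² | d ∣ u₁+u₂, u₁ ∉ S₍₁₎, u₂ ∉ S₍₂₎}`. -/
def T (k : ℕ) (a : ℕ → ℕ) : Set (ℤ × ℤ) :=
  {u | (a k : ℤ) ∣ u.1 + u.2 ∧ (∀ n ∈ S1 k a, (n : ℤ) ≠ u.1) ∧ (∀ n ∈ S2 k a, (n : ℤ) ≠ u.2)}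

/-- `deg` for integer points. -/
def degZ (k : ℕ) (a : ℕ → ℕ) (u : ℤ × ℤ) : ℤ := (u.1 + u.2) / (a k : ℤ)

/-- The Castelnuovo–Mumford regularity, expressed combinatorially:
`max({deg u + 1 : u ∈ S'∖S} ∪ {deg u + 2 : u ∈ T})`. -/
noncomputable def reg (k : ℕ) (a : ℕ → ℕ) : ℤ :=
  sSup ({z : ℤ | ∃ u ∈ S' k a \ S k a, z = (deg k a u : ℤ) + 1} ∪
        {z : ℤ | ∃ u ∈ T k a, z = degZ k a u + 2})

/-- Frobenius number of `S₍₁₎` (greatest integer not in it; `-1` if the semigroup is all of `ℕ`). -/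
noncomputable def F1 (k : ℕ) (a : ℕ → ℕ) : ℤ :=
  sSup {z : ℤ | ∀ n ∈ S1 k a, (n : ℤ) ≠ z}

/-- Frobenius number of `S₍₂₎`. -/
noncomputable def F2 (k : ℕ) (a : ℕ → ℕ) : ℤ :=
  sSup {z : ℤ | ∀ n ∈ S2 k a, (n : ℤ) ≠ z}

/-- The largest gap `λ_max = max_{1 ≤ i ≤ k} (a i - a (i-1) - 1)`. -/
def lamMax (k : ℕ) (a : ℕ → ℕ) : ℕ :=
  (Finset.Icc 1 k).sup (fun i => a i - a (i-1) - 1)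

/-- The second largest gap: the minimum over `i` of the largest gap among indices `≠ i`. -/
noncomputable def lamSl (k : ℕ) (a : ℕ → ℕ) : ℕ :=
  sInf {m | ∃ i, 1 ≤ i ∧ i ≤ k ∧
    m = ((Finset.Icc 1 k).erase i).sup (fun j => a j - a (j-1) - 1)}

/-- The set `A₁ = {a 0, a 1, …, a k}`. -/
def A1set (k : ℕ) (a : ℕ → ℕ) : Set ℕ := {m | ∃ j ≤ k, a j = m}


section Aux

variable {k : ℕ} {a : ℕ → ℕ}

/-- strict monotonicity -/
lemma a_lt (hmono : ∀ i, i < k → a i < a (i+1)) :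
    ∀ {i j : ℕ}, i < j → j ≤ k → a i < a j := by
  intro i j hij hj
  induction j with
  | zero => omega
  | succ n ih =>
    rcases Nat.lt_succ_iff_lt_or_eq.mp hij with h | h
    · exact lt_trans (ih h (by omega)) (hmono n (by omega))
    · subst h; exact hmono i (by omega)

lemma a_le (hmono : ∀ i, i < k → a i < a (i+1)) {i j : ℕ} (hij : i ≤ j) (hj : j ≤ k) :
    a i ≤ a j := by
  rcases eq_or_lt_of_le hij with h | h
  · subst h; exact le_refl _
  · exact le_of_lt (a_lt hmono h hj)

lemma a_ge_self (ha0 : a 0 = 0) (hmono : ∀ i, i < k → a i < a (i+1)) {i : ℕ} (hi : i ≤ k) :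
    i ≤ a i := by
  induction i with
  | zero => omega
  | succ n ih => have := hmono n (by omega); omega

/-- Bezout for finset gcd. -/
lemma bezout (s : Finset ℕ) (f : ℕ → ℕ) :
    ∃ c : ℕ → ℤ, ((s.gcd f : ℕ) : ℤ) = ∑ i ∈ s, c i * f i := by
  classical
  induction s using Finset.induction with
  | empty => exact ⟨0, by simp⟩
  | @insert j t hj ih =>
    obtain ⟨c, hc⟩ := ih
    refine ⟨fun i => if i = j then Nat.gcdA (f j) (t.gcd f) else
      Nat.gcdB (f j) (t.gcd f) * c i, ?_⟩
    rw [Finset.gcd_insert, Finset.sum_insert hj]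
    have hb := Nat.gcd_eq_gcd_ab (f j) (t.gcd f)
    have : (∑ i ∈ t, (if i = j then Nat.gcdA (f j) (t.gcd f) else
        Nat.gcdB (f j) (t.gcd f) * c i) * f i)
        = Nat.gcdB (f j) (t.gcd f) * ∑ i ∈ t, c i * f i := by
      rw [Finset.mul_sum]
      refine Finset.sum_congr rfl (fun i hi => ?_)
      have : i ≠ j := fun h => hj (h ▸ hi)
      simp [this, mul_assoc]
    rw [this, ← hc]
    beta_reduce
    rw [if_pos rfl, show (gcd (f j) (t.gcd f)) = Nat.gcd (f j) (t.gcd f) from rfl, hb]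
    ring

/-- Generic: if a finite family has gcd 1, its ℕ-combinations meet every residue class mod d. -/
lemma resid_aux {d : ℕ} (hd : 0 < d) (s : Finset ℕ) (f : ℕ → ℕ) (hgcd : s.gcd f = 1)
    (r : ℕ) : ∃ x : ℕ → ℕ, (∑ i ∈ s, x i * f i) % d = r % d := by
  obtain ⟨c, hc⟩ := bezout s f
  rw [hgcd] at hc
  refine ⟨fun i => ((r * c i) % (d : ℤ)).toNat, ?_⟩
  have hdz : (d : ℤ) ≠ 0 := by exact_mod_cast hd.ne'
  have key : ((∑ i ∈ s, ((r * c i) % (d : ℤ)).toNat * f i : ℕ) : ℤ) % d = (r : ℤ) % d := by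
    push_cast
    have h1 : ∀ i ∈ s, (((r * c i) % (d : ℤ)).toNat : ℤ) = (r * c i) % (d : ℤ) := by
      intro i _
      exact Int.toNat_of_nonneg (Int.emod_nonneg _ hdz)
    rw [Finset.sum_congr rfl (fun i hi => by rw [h1 i hi])]
    rw [Finset.sum_int_mod]
    have h2 : ∀ i ∈ s, ((r * c i) % (d : ℤ) * (f i)) % d = ((r : ℤ) * c i * f i) % d := by
      intro i _
      exact (Int.ModEq.mul_right _ (Int.emod_emod_of_dvd _ dvd_rfl))
    rw [Finset.sum_congr rfl h2, ← Finset.sum_int_mod]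
    congr 1
    calc ∑ i ∈ s, (r : ℤ) * c i * f i = r * ∑ i ∈ s, c i * f i := by
          rw [Finset.mul_sum]; exact Finset.sum_congr rfl (fun i _ => by ring)
      _ = r := by rw [← hc]; simp
  have : (((∑ i ∈ s, ((r * c i) % (d : ℤ)).toNat * f i) % d : ℕ) : ℤ) = ((r % d : ℕ) : ℤ) := by
    push_cast
    exact_mod_cast key
  exact_mod_cast this

lemma sum_ite_single (s : Finset ℕ) (j : ℕ) (hj : j ∈ s) (q : ℕ) (f : ℕ → ℕ) :
    ∑ i ∈ s, (if i = j then q else 0) * f i = q * f j := by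
  rw [Finset.sum_eq_single_of_mem j hj (fun b _ hb => by simp [hb])]
  simp

lemma sum_ite_single' (s : Finset ℕ) (j : ℕ) (hj : j ∈ s) (q : ℕ) :
    ∑ i ∈ s, (if i = j then q else 0) = q := by
  rw [Finset.sum_ite_eq' s j (fun _ => q), if_pos hj]

lemma delta1_le {n : ℕ} (x : ℕ → ℕ) (h : n = ∑ i ∈ Finset.Icc 1 k, x i * a i) :
    delta1 k a n ≤ ∑ i ∈ Finset.Icc 1 k, x i :=
  Nat.sInf_le ⟨x, h, rfl⟩

lemma delta1_spec {n : ℕ} (h : n ∈ S1 k a) :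
    ∃ x : ℕ → ℕ, n = ∑ i ∈ Finset.Icc 1 k, x i * a i ∧
      delta1 k a n = ∑ i ∈ Finset.Icc 1 k, x i := by
  obtain ⟨x, hx⟩ := h
  exact Nat.sInf_mem (⟨_, x, hx, rfl⟩ :
    Set.Nonempty {m | ∃ x : ℕ → ℕ, n = ∑ i ∈ Finset.Icc 1 k, x i * a i ∧
      m = ∑ i ∈ Finset.Icc 1 k, x i})

lemma delta2_le {n : ℕ} (x : ℕ → ℕ) (h : n = ∑ i ∈ Finset.range k, x i * (a k - a i)) :
    delta2 k a n ≤ ∑ i ∈ Finset.range k, x i :=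
  Nat.sInf_le ⟨x, h, rfl⟩

lemma delta2_spec {n : ℕ} (h : n ∈ S2 k a) :
    ∃ x : ℕ → ℕ, n = ∑ i ∈ Finset.range k, x i * (a k - a i) ∧
      delta2 k a n = ∑ i ∈ Finset.range k, x i := by
  obtain ⟨x, hx⟩ := h
  exact Nat.sInf_mem (⟨_, x, hx, rfl⟩ :
    Set.Nonempty {m | ∃ x : ℕ → ℕ, n = ∑ i ∈ Finset.range k, x i * (a k - a i) ∧
      m = ∑ i ∈ Finset.range k, x i})

lemma delta1_add_mul (hk : 1 ≤ k) {n : ℕ} (h : n ∈ S1 k a) (q : ℕ) :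
    delta1 k a (n + q * a k) ≤ delta1 k a n + q := by
  obtain ⟨x, hx, hm⟩ := delta1_spec h
  have hkmem : k ∈ Finset.Icc 1 k := by simp [hk]
  have hrep : n + q * a k = ∑ i ∈ Finset.Icc 1 k, (x i + if i = k then q else 0) * a i := by
    have he : ∑ i ∈ Finset.Icc 1 k, (x i + if i = k then q else 0) * a i
        = ∑ i ∈ Finset.Icc 1 k, (x i * a i + (if i = k then q else 0) * a i) :=
      Finset.sum_congr rfl (fun i _ => add_mul _ _ _)
    rw [he, Finset.sum_add_distrib, sum_ite_single _ k hkmem q a, hx]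
  calc delta1 k a (n + q * a k) ≤ ∑ i ∈ Finset.Icc 1 k, (x i + if i = k then q else 0) :=
        delta1_le _ hrep
    _ = delta1 k a n + q := by
        rw [Finset.sum_add_distrib, sum_ite_single' _ k hkmem q, hm]

lemma delta2_add_mul (hk : 1 ≤ k) (ha0 : a 0 = 0) {n : ℕ} (h : n ∈ S2 k a) (q : ℕ) :
    delta2 k a (n + q * a k) ≤ delta2 k a n + q := by
  obtain ⟨x, hx, hm⟩ := delta2_spec h
  have h0mem : (0 : ℕ) ∈ Finset.range k := by simp [hk]; omega
  have hrep : n + q * a k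
      = ∑ i ∈ Finset.range k, (x i + if i = 0 then q else 0) * (a k - a i) := by
    have he : ∑ i ∈ Finset.range k, (x i + if i = 0 then q else 0) * (a k - a i)
        = ∑ i ∈ Finset.range k, (x i * (a k - a i) + (if i = 0 then q else 0) * (a k - a i)) :=
      Finset.sum_congr rfl (fun i _ => add_mul _ _ _)
    rw [he, Finset.sum_add_distrib, sum_ite_single _ 0 h0mem q (fun i => a k - a i), hx, ha0]
    simp
  calc delta2 k a (n + q * a k)
      ≤ ∑ i ∈ Finset.range k, (x i + if i = 0 then q else 0) := delta2_le _ hrep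
    _ = delta2 k a n + q := by
        rw [Finset.sum_add_distrib, sum_ite_single' _ 0 h0mem q, hm]

lemma mul_d_mem_S1 (hk : 1 ≤ k) (q : ℕ) :
    q * a k ∈ S1 k a ∧ delta1 k a (q * a k) ≤ q := by
  have hkmem : k ∈ Finset.Icc 1 k := by simp [hk]
  have hrep : q * a k = ∑ i ∈ Finset.Icc 1 k, (if i = k then q else 0) * a i :=
    (sum_ite_single _ k hkmem q a).symm
  exact ⟨⟨_, hrep⟩, le_of_le_of_eq (delta1_le _ hrep) (sum_ite_single' _ k hkmem q)⟩

lemma gen_mem_S1 {j : ℕ} (hj1 : 1 ≤ j) (hjk : j ≤ k) :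
    a j ∈ S1 k a ∧ delta1 k a (a j) ≤ 1 := by
  have hjmem : j ∈ Finset.Icc 1 k := by simp; omega
  have hrep : a j = ∑ i ∈ Finset.Icc 1 k, (if i = j then 1 else 0) * a i := by
    rw [sum_ite_single _ j hjmem 1 a, one_mul]
  exact ⟨⟨_, hrep⟩, le_of_le_of_eq (delta1_le _ hrep) (sum_ite_single' _ j hjmem 1)⟩

lemma gcd2 (ha0 : a 0 = 0) (hmono : ∀ i, i < k → a i < a (i+1)) (hk : 1 ≤ k)
    (hgcd : (Finset.Icc 1 k).gcd a = 1) :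
    (Finset.range k).gcd (fun i => a k - a i) = 1 := by
  set g := (Finset.range k).gcd (fun i => a k - a i) with hg
  have h0 : (0 : ℕ) ∈ Finset.range k := by simp; omega
  have hgd : g ∣ a k := by
    have := Finset.gcd_dvd (f := fun i => a k - a i) h0
    simpa [ha0] using this
  have : g ∣ (Finset.Icc 1 k).gcd a := by
    apply Finset.dvd_gcd
    intro j hj
    simp only [Finset.mem_Icc] at hj
    rcases eq_or_lt_of_le hj.2 with h | h
    · subst h; exact hgd
    · have hj' : j ∈ Finset.range k := by simp; omega
      have h1 : g ∣ a k - a j := Finset.gcd_dvd hj'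
      have h2 : a j ≤ a k := a_le hmono hj.2 le_rfl
      have : a j = a k - (a k - a j) := by omega
      rw [this]
      exact Nat.dvd_sub hgd h1
  rw [hgcd] at this
  exact Nat.dvd_one.mp this

lemma omega1_spec (hd : 0 < a k) (hgcd : (Finset.Icc 1 k).gcd a = 1) (i : ℕ) :
    omega1 k a i ∈ S1 k a ∧ omega1 k a i % a k = i % a k := by
  obtain ⟨x, hx⟩ := resid_aux hd (Finset.Icc 1 k) a hgcd i
  exact Nat.sInf_mem (⟨_, ⟨x, rfl⟩, hx⟩ :
    Set.Nonempty {n | n ∈ S1 k a ∧ n % a k = i % a k})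

lemma omega1_min {n i : ℕ} (h1 : n ∈ S1 k a) (h2 : n % a k = i % a k) :
    omega1 k a i ≤ n :=
  Nat.sInf_le ⟨h1, h2⟩

lemma omega2_spec (ha0 : a 0 = 0) (hmono : ∀ i, i < k → a i < a (i+1)) (hk : 1 ≤ k)
    (hd : 0 < a k) (hgcd : (Finset.Icc 1 k).gcd a = 1) (i : ℕ) :
    omega2 k a i ∈ S2 k a ∧ omega2 k a i % a k = i % a k := by
  obtain ⟨x, hx⟩ := resid_aux hd (Finset.range k) (fun i => a k - a i)
    (gcd2 ha0 hmono hk hgcd) i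
  exact Nat.sInf_mem (⟨_, ⟨x, rfl⟩, hx⟩ :
    Set.Nonempty {n | n ∈ S2 k a ∧ n % a k = i % a k})

lemma omega2_min {n i : ℕ} (h1 : n ∈ S2 k a) (h2 : n % a k = i % a k) :
    omega2 k a i ≤ n :=
  Nat.sInf_le ⟨h1, h2⟩

lemma sum_smul_e (x : ℕ → ℕ) :
    (∑ i ∈ Finset.range (k+1), x i • e k a (a i))
      = (∑ i ∈ Finset.range (k+1), x i * a i,
         ∑ i ∈ Finset.range (k+1), x i * (a k - a i)) := by
  refine Prod.ext ?_ ?_ <;>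
    simp [Prod.fst_sum, Prod.snd_sum, e, smul_eq_mul]

lemma sum_a_Icc (ha0 : a 0 = 0) (x : ℕ → ℕ) :
    ∑ i ∈ Finset.range (k+1), x i * a i = ∑ i ∈ Finset.Icc 1 k, x i * a i := by
  refine (Finset.sum_subset ?_ ?_).symm
  · intro i hi; simp at hi ⊢; omega
  · intro i hi hni
    simp at hi hni
    have : i = 0 := by omega
    simp [this, ha0]

lemma range_eq_insert (hk : 1 ≤ k) : Finset.range (k+1) = insert 0 (Finset.Icc 1 k) := by
  ext i; simp; omega

lemma sum_coords (hmono : ∀ i, i < k → a i < a (i+1)) (x : ℕ → ℕ) :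
    ∑ i ∈ Finset.range (k+1), x i * (a k - a i) + ∑ i ∈ Finset.range (k+1), x i * a i
      = (∑ i ∈ Finset.range (k+1), x i) * a k := by
  rw [← Finset.sum_add_distrib, Finset.sum_mul]
  refine Finset.sum_congr rfl fun i hi => ?_
  have hik : i ≤ k := by simp at hi; omega
  have hle : a i ≤ a k := a_le hmono hik le_rfl
  rw [← Nat.mul_add, Nat.sub_add_cancel hle]

lemma memS_iff1 (ha0 : a 0 = 0) (hmono : ∀ i, i < k → a i < a (i+1)) (hk : 1 ≤ k)
    (hd : 0 < a k) (u : ℕ × ℕ) :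
    u ∈ S k a ↔ a k ∣ u.1 + u.2 ∧ u.1 ∈ S1 k a ∧ delta1 k a u.1 ≤ deg k a u := by
  constructor
  · rintro ⟨x, hu⟩
    rw [sum_smul_e] at hu
    have h1 : u.1 = ∑ i ∈ Finset.range (k+1), x i * a i := by rw [hu]
    have h2 : u.2 = ∑ i ∈ Finset.range (k+1), x i * (a k - a i) := by rw [hu]
    have hsum : u.1 + u.2 = (∑ i ∈ Finset.range (k+1), x i) * a k := by
      rw [h1, h2, add_comm]; exact sum_coords hmono x
    have hdeg : deg k a u = ∑ i ∈ Finset.range (k+1), x i := by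
      rw [deg, hsum, Nat.mul_div_cancel _ hd]
    refine ⟨⟨_, by rw [hsum, mul_comm]⟩, ⟨x, by rw [h1, sum_a_Icc ha0]⟩, ?_⟩
    calc delta1 k a u.1 ≤ ∑ i ∈ Finset.Icc 1 k, x i :=
          delta1_le x (by rw [h1, sum_a_Icc ha0])
      _ ≤ ∑ i ∈ Finset.range (k+1), x i :=
          Finset.sum_le_sum_of_subset (by intro i hi; simp at hi ⊢; omega)
      _ = deg k a u := hdeg.symm
  · rintro ⟨hdvd, hS1, hδ⟩
    obtain ⟨x, hx, hm⟩ := delta1_spec hS1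
    set m := deg k a u with hmdef
    set s := ∑ i ∈ Finset.Icc 1 k, x i with hsdef
    have hsm : s ≤ m := le_of_eq_of_le hm.symm hδ
    set x' : ℕ → ℕ := fun i => if i = 0 then m - s else x i with hx'
    have h0 : (0:ℕ) ∉ Finset.Icc 1 k := by simp
    have hx'sum : ∑ i ∈ Finset.range (k+1), x' i = m := by
      rw [range_eq_insert hk, Finset.sum_insert h0]
      have heq : ∑ i ∈ Finset.Icc 1 k, x' i = s := Finset.sum_congr rfl (fun i hi => by
        simp only [Finset.mem_Icc] at hi
        simp [hx', show i ≠ 0 by omega])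
      rw [heq]
      simp only [hx', if_pos rfl]
      omega
    have hx'a : ∑ i ∈ Finset.range (k+1), x' i * a i = u.1 := by
      rw [sum_a_Icc ha0]
      rw [show ∑ i ∈ Finset.Icc 1 k, x' i * a i = ∑ i ∈ Finset.Icc 1 k, x i * a i from
        Finset.sum_congr rfl (fun i hi => by
          simp only [Finset.mem_Icc] at hi
          simp [hx', show i ≠ 0 by omega])]
      exact hx.symm
    have hum : u.1 + u.2 = m * a k := by
      obtain ⟨c, hc⟩ := hdvd
      rw [hmdef, deg, hc, Nat.mul_div_cancel_left _ hd, mul_comm]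
    have hx'b : ∑ i ∈ Finset.range (k+1), x' i * (a k - a i) = u.2 := by
      have h := sum_coords (a := a) hmono x'
      rw [hx'a, hx'sum] at h
      have h2 := h.trans hum.symm
      omega
    exact ⟨x', by rw [sum_smul_e, hx'a, hx'b]⟩

lemma memS_iff2 (ha0 : a 0 = 0) (hmono : ∀ i, i < k → a i < a (i+1)) (hk : 1 ≤ k)
    (hd : 0 < a k) (u : ℕ × ℕ) :
    u ∈ S k a ↔ a k ∣ u.1 + u.2 ∧ u.2 ∈ S2 k a ∧ delta2 k a u.2 ≤ deg k a u := by
  constructor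
  · rintro ⟨x, hu⟩
    rw [sum_smul_e] at hu
    have h1 : u.1 = ∑ i ∈ Finset.range (k+1), x i * a i := by rw [hu]
    have h2 : u.2 = ∑ i ∈ Finset.range (k+1), x i * (a k - a i) := by rw [hu]
    have h2' : u.2 = ∑ i ∈ Finset.range k, x i * (a k - a i) := by
      rw [h2, Finset.sum_range_succ, Nat.sub_self, Nat.mul_zero, Nat.add_zero]
    have hsum : u.1 + u.2 = (∑ i ∈ Finset.range (k+1), x i) * a k := by
      rw [h1, h2, add_comm]; exact sum_coords hmono x
    have hdeg : deg k a u = ∑ i ∈ Finset.range (k+1), x i := by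
      rw [deg, hsum, Nat.mul_div_cancel _ hd]
    refine ⟨⟨_, by rw [hsum, mul_comm]⟩, ⟨x, h2'⟩, ?_⟩
    calc delta2 k a u.2 ≤ ∑ i ∈ Finset.range k, x i := delta2_le x h2'
      _ ≤ ∑ i ∈ Finset.range (k+1), x i :=
          Finset.sum_le_sum_of_subset (by intro i hi; simp at hi ⊢; omega)
      _ = deg k a u := hdeg.symm
  · rintro ⟨hdvd, hS2, hδ⟩
    obtain ⟨y, hy, hm⟩ := delta2_spec hS2
    set m := deg k a u with hmdef
    set s := ∑ i ∈ Finset.range k, y i with hsdef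
    have hsm : s ≤ m := le_of_eq_of_le hm.symm hδ
    set x' : ℕ → ℕ := fun i => if i = k then m - s else y i with hx'
    have hx'sum : ∑ i ∈ Finset.range (k+1), x' i = m := by
      rw [Finset.sum_range_succ]
      have heq : ∑ i ∈ Finset.range k, x' i = s := Finset.sum_congr rfl (fun i hi => by
        simp only [Finset.mem_range] at hi
        simp [hx', show i ≠ k by omega])
      rw [heq]
      simp only [hx', if_pos rfl]
      omega
    have hx'b : ∑ i ∈ Finset.range (k+1), x' i * (a k - a i) = u.2 := by
      rw [Finset.sum_range_succ, Nat.sub_self, Nat.mul_zero, Nat.add_zero]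
      rw [show ∑ i ∈ Finset.range k, x' i * (a k - a i)
          = ∑ i ∈ Finset.range k, y i * (a k - a i) from
        Finset.sum_congr rfl (fun i hi => by
          simp only [Finset.mem_range] at hi
          simp [hx', show i ≠ k by omega])]
      exact hy.symm
    have hum : u.1 + u.2 = m * a k := by
      obtain ⟨c, hc⟩ := hdvd
      rw [hmdef, deg, hc, Nat.mul_div_cancel_left _ hd, mul_comm]
    have hx'a : ∑ i ∈ Finset.range (k+1), x' i * a i = u.1 := by
      have h := sum_coords (a := a) hmono x'
      rw [hx'b, hx'sum] at h
      have h2 := h.trans hum.symm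
      omega
    exact ⟨x', by rw [sum_smul_e, hx'a, hx'b]⟩

lemma memS'_iff (ha0 : a 0 = 0) (hmono : ∀ i, i < k → a i < a (i+1)) (hk : 1 ≤ k)
    (hd : 0 < a k) (u : ℕ × ℕ) :
    u ∈ S' k a ↔ a k ∣ u.1 + u.2 ∧ u.1 ∈ S1 k a ∧ u.2 ∈ S2 k a := by
  have he0 : ∀ p : ℕ, u + p • e k a 0 = (u.1, u.2 + p * a k) := by
    intro p
    simp [e, Prod.ext_iff, smul_eq_mul]
  have hed : ∀ p : ℕ, u + p • e k a (a k) = (u.1 + p * a k, u.2) := by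
    intro p
    simp [e, Prod.ext_iff, smul_eq_mul]
  constructor
  · rintro ⟨p, hp0, hpd⟩
    rw [he0 p, memS_iff1 ha0 hmono hk hd] at hp0
    rw [hed p, memS_iff2 ha0 hmono hk hd] at hpd
    obtain ⟨hdvd0, hS1, -⟩ := hp0
    obtain ⟨-, hS2, -⟩ := hpd
    simp only at hdvd0 hS1 hS2
    refine ⟨?_, hS1, hS2⟩
    have : u.1 + (u.2 + p * a k) = (u.1 + u.2) + p * a k := by ring
    rw [this] at hdvd0
    exact (Nat.dvd_add_right (Dvd.intro_left p rfl)).mp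
      (by rwa [add_comm (u.1+u.2)] at hdvd0)
  · rintro ⟨hdvd, h1, h2⟩
    refine ⟨delta1 k a u.1 + delta2 k a u.2, ?_, ?_⟩
    · rw [he0 _, memS_iff1 ha0 hmono hk hd]
      simp only
      refine ⟨⟨(u.1+u.2)/(a k) + (delta1 k a u.1 + delta2 k a u.2), ?_⟩, h1, ?_⟩
      · obtain ⟨c, hc⟩ := hdvd
        rw [← add_assoc, hc, Nat.mul_div_cancel_left _ hd]
        ring
      · have : deg k a (u.1, u.2 + (delta1 k a u.1 + delta2 k a u.2) * a k)
            = (u.1 + u.2)/(a k) + (delta1 k a u.1 + delta2 k a u.2) := by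
          rw [deg]
          simp only
          rw [← add_assoc, Nat.add_mul_div_right _ _ hd]
        rw [this]
        first
        | exact le_trans (Nat.le_add_right _ _) (Nat.le_add_left _ _)
        | exact le_trans (Nat.le_add_left _ _) (Nat.le_add_left _ _)
    · rw [hed _, memS_iff2 ha0 hmono hk hd]
      simp only
      refine ⟨⟨(u.1+u.2)/(a k) + (delta1 k a u.1 + delta2 k a u.2), ?_⟩, h2, ?_⟩
      · obtain ⟨c, hc⟩ := hdvd
        rw [show u.1 + (delta1 k a u.1 + delta2 k a u.2) * a k + u.2
            = (u.1 + u.2) + (delta1 k a u.1 + delta2 k a u.2) * a k by ring, hc,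
          Nat.mul_div_cancel_left _ hd]
        ring
      · have : deg k a (u.1 + (delta1 k a u.1 + delta2 k a u.2) * a k, u.2)
            = (u.1 + u.2)/(a k) + (delta1 k a u.1 + delta2 k a u.2) := by
          rw [deg]
          simp only
          rw [show u.1 + (delta1 k a u.1 + delta2 k a u.2) * a k + u.2
              = u.1 + u.2 + (delta1 k a u.1 + delta2 k a u.2) * a k by ring,
            Nat.add_mul_div_right _ _ hd]
        rw [this]
        first
        | exact le_trans (Nat.le_add_right _ _) (Nat.le_add_left _ _)
        | exact le_trans (Nat.le_add_left _ _) (Nat.le_add_left _ _)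

lemma decomp {d x y : ℕ} (hxy : x ≤ y) (hmod : x % d = y % d) : ∃ q, y = x + q * d := by
  obtain ⟨q, hq⟩ := (Nat.modEq_iff_dvd' hxy).mp hmod
  refine ⟨q, ?_⟩
  have h2 : y = d * q + x := (Nat.sub_eq_iff_eq_add hxy).mp hq
  rw [h2, mul_comm]
  ring

lemma mod_compl {d x y : ℕ} (hd : 0 < d) (hdvd : d ∣ x + y) (hx : x % d ≠ 0) :
    y % d = d - x % d := by
  have h0 : (x % d + y % d) % d = 0 := by
    rw [← Nat.add_mod]
    omega
  have hxl : x % d < d := Nat.mod_lt _ hd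
  have hyl : y % d < d := Nat.mod_lt _ hd
  obtain ⟨c, hc⟩ := Nat.dvd_of_mod_eq_zero h0
  rcases Nat.lt_or_ge c 2 with h | h
  · interval_cases c <;> omega
  · have h2 : 2 * d ≤ x % d + y % d := by
      rw [hc]
      calc 2 * d = d * 2 := by ring
        _ ≤ d * c := Nat.mul_le_mul_left d h
    omega

lemma dvd_of_mod_compl {d x y r : ℕ} (hr : 0 < r) (hrd : r < d)
    (hx : x % d = r) (hy : y % d = d - r) : d ∣ x + y := by
  have h : (x + y) % d = 0 := by
    rw [Nat.add_mod, hx, hy, show r + (d - r) = d from by omega, Nat.mod_self]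
  exact Nat.dvd_of_mod_eq_zero h

end Aux

theorem statement_3 (k : ℕ) (a : ℕ → ℕ) (hk : 3 ≤ k) (ha0 : a 0 = 0)
    (hmono : ∀ i, i < k → a i < a (i+1)) (hgcd : (Finset.Icc 1 k).gcd a = 1)
    (hne : (II k a).Nonempty)
    (hcond : ∀ i ∈ II k a, delta1 k a (w k a i).1 = deg k a (w k a i) + 1 ∧
      delta2 k a (w k a i).2 = deg k a (w k a i) + 1) :
    S' k a \ S k a = w k a '' II k a ∧
    (S' k a \ S k a).ncard = (II k a).ncard ∧
    (S' k a \ S k a).ncard ≤ a k - k := by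
  classical
  have hk1 : 1 ≤ k := by omega
  have hd : 0 < a k := by
    have := a_lt hmono (show 0 < k by omega) le_rfl
    omega
  have hkd : k ≤ a k := a_ge_self ha0 hmono le_rfl
  have main : S' k a \ S k a = w k a '' II k a := by
    ext u
    constructor
    · rintro ⟨huS', huS⟩
      rw [memS'_iff ha0 hmono hk1 hd] at huS'
      obtain ⟨hdvd, h1, h2⟩ := huS'
      have hnd1 : deg k a u < delta1 k a u.1 := by
        by_contra h
        exact huS ((memS_iff1 ha0 hmono hk1 hd u).mpr ⟨hdvd, h1, by omega⟩)
      have hnd2 : deg k a u < delta2 k a u.2 := by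
        by_contra h
        exact huS ((memS_iff2 ha0 hmono hk1 hd u).mpr ⟨hdvd, h2, by omega⟩)
      set i := u.1 % a k with hidef
      have hilt : i < a k := Nat.mod_lt _ hd
      have hi0 : i ≠ 0 := by
        intro h0
        obtain ⟨q, hq⟩ := Nat.dvd_of_mod_eq_zero (show u.1 % a k = 0 by omega)
        have hδ : delta1 k a u.1 ≤ q := by
          have hh := (mul_d_mem_S1 (a := a) hk1 q).2
          rw [hq, mul_comm]
          exact hh
        have hdeg : q ≤ deg k a u := by
          rw [deg]
          calc q = (a k * q) / a k := by rw [Nat.mul_div_cancel_left _ hd]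
            _ ≤ (u.1 + u.2) / a k := Nat.div_le_div_right (by omega)
        omega
      have h2mod : u.2 % a k = a k - i := by
        have := mod_compl hd hdvd (by omega : u.1 % a k ≠ 0)
        omega
      have hmod1 : omega1 k a i % a k = i := by
        rw [(omega1_spec hd hgcd i).2, Nat.mod_eq_of_lt hilt]
      have hmod2 : omega2 k a (a k - i) % a k = a k - i := by
        rw [(omega2_spec ha0 hmono hk1 hd hgcd (a k - i)).2,
          Nat.mod_eq_of_lt (by omega)]
      have hle1 : omega1 k a i ≤ u.1 := omega1_min h1 (by rw [Nat.mod_eq_of_lt hilt])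
      have hle2 : omega2 k a (a k - i) ≤ u.2 :=
        omega2_min h2 (by rw [h2mod, Nat.mod_eq_of_lt (by omega)])
      obtain ⟨q1, hq1⟩ := decomp hle1 (by rw [hmod1])
      obtain ⟨q2, hq2⟩ := decomp hle2 (by rw [hmod2, h2mod])  -- check
      have hsplit : u.1 + u.2
          = (omega1 k a i + omega2 k a (a k - i)) + (q1 + q2) * a k := by
        rw [hq1, hq2]; ring
      have hdvd0 : a k ∣ omega1 k a i + omega2 k a (a k - i) := by
        rw [hsplit] at hdvd
        rw [add_comm] at hdvd
        exact (Nat.dvd_add_right (dvd_mul_left _ _)).mp hdvd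
      obtain ⟨m0, hm0⟩ := hdvd0
      have hdegu : deg k a u = m0 + q1 + q2 := by
        have hs : u.1 + u.2 = (m0 + q1 + q2) * a k := by
          rw [hsplit, hm0]
          ring
        rw [deg, hs, Nat.mul_div_cancel _ hd]
      have hdegw : deg k a (w k a i) = m0 := by
        have hww : (w k a i).1 + (w k a i).2 = a k * m0 := hm0
        rw [deg, hww, Nat.mul_div_cancel_left _ hd]
      have hw1S : omega1 k a i ∈ S1 k a := (omega1_spec hd hgcd i).1
      have hw2S : omega2 k a (a k - i) ∈ S2 k a :=
        (omega2_spec ha0 hmono hk1 hd hgcd (a k - i)).1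
      have hnotaj : ∀ j, 1 ≤ j → j ≤ k - 1 → i ≠ a j := by
        intro j hj1 hjk hiaj
        have hjk' : j ≤ k := by omega
        have hajS : a j ∈ S1 k a := (gen_mem_S1 hj1 hjk').1
        have hajlt : a j < a k := a_lt hmono (show j < k by omega) le_rfl
        have hle : a j ≤ u.1 := by
          have := Nat.mod_le u.1 (a k)
          omega
        obtain ⟨q, hq⟩ := decomp hle
          (by rw [Nat.mod_eq_of_lt hajlt]; omega)
        have hδ : delta1 k a u.1 ≤ 1 + q := by
          rw [hq]
          calc delta1 k a (a j + q * a k) ≤ delta1 k a (a j) + q :=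
                delta1_add_mul hk1 hajS q
            _ ≤ 1 + q := by
                have := (gen_mem_S1 (a := a) hj1 hjk').2
                omega
        have hu2 : a k - a j ≤ u.2 := by
          have := Nat.mod_le u.2 (a k)
          omega
        have hdg : q + 1 ≤ deg k a u := by
          have hsum : (q + 1) * a k ≤ u.1 + u.2 := by
            calc (q + 1) * a k = (a j + q * a k) + (a k - a j) := by
                  rw [show a j + q * a k + (a k - a j)
                      = q * a k + (a j + (a k - a j)) from by ring,
                    Nat.add_sub_cancel' (le_of_lt hajlt)]
                  ring
              _ ≤ u.1 + u.2 := by rw [← hq]; exact Nat.add_le_add le_rfl hu2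
          rw [deg]
          calc q + 1 = ((q + 1) * a k) / a k := by rw [Nat.mul_div_cancel _ hd]
            _ ≤ (u.1 + u.2) / a k := Nat.div_le_div_right hsum
        omega
      have hiI : i ∈ II k a := by
        refine ⟨by omega, by omega, hnotaj, ?_⟩
        rw [hdegw]
        by_contra h
        push_neg at h
        have hwh : delta1 k a (w k a i).1 = delta1 k a (omega1 k a i) := rfl
        rw [hwh] at h
        have hδu : delta1 k a u.1 ≤ m0 + q1 := by
          rw [hq1]
          calc delta1 k a (omega1 k a i + q1 * a k)
              ≤ delta1 k a (omega1 k a i) + q1 := delta1_add_mul hk1 hw1S q1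
            _ ≤ m0 + q1 := by omega
        omega
      obtain ⟨hc1, hc2⟩ := hcond i hiI
      rw [hdegw] at hc1 hc2
      have hwh1 : delta1 k a (w k a i).1 = delta1 k a (omega1 k a i) := rfl
      have hwh2 : delta2 k a (w k a i).2 = delta2 k a (omega2 k a (a k - i)) := rfl
      rw [hwh1] at hc1
      rw [hwh2] at hc2
      have hq2z : q2 = 0 := by
        have hδu : delta1 k a u.1 ≤ m0 + 1 + q1 := by
          rw [hq1]
          calc delta1 k a (omega1 k a i + q1 * a k)
              ≤ delta1 k a (omega1 k a i) + q1 := delta1_add_mul hk1 hw1S q1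
            _ ≤ m0 + 1 + q1 := by omega
        omega
      have hq1z : q1 = 0 := by
        have hδu : delta2 k a u.2 ≤ m0 + 1 + q2 := by
          rw [hq2]
          calc delta2 k a (omega2 k a (a k - i) + q2 * a k)
              ≤ delta2 k a (omega2 k a (a k - i)) + q2 :=
                delta2_add_mul hk1 ha0 hw2S q2
            _ ≤ m0 + 1 + q2 := by omega
        omega
      refine ⟨i, hiI, ?_⟩
      have e1 : (w k a i).1 = u.1 := by
        show omega1 k a i = u.1
        rw [hq1, hq1z, zero_mul, add_zero]
      have e2 : (w k a i).2 = u.2 := by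
        show omega2 k a (a k - i) = u.2
        rw [hq2, hq2z, zero_mul, add_zero]
      exact Prod.ext e1 e2
    · rintro ⟨i, hiI, rfl⟩
      obtain ⟨hi1, hi2, hnot, hdlt⟩ := hiI
      have hilt : i < a k := by omega
      have hmod1 : omega1 k a i % a k = i := by
        rw [(omega1_spec hd hgcd i).2, Nat.mod_eq_of_lt hilt]
      have hmod2 : omega2 k a (a k - i) % a k = a k - i := by
        rw [(omega2_spec ha0 hmono hk1 hd hgcd (a k - i)).2,
          Nat.mod_eq_of_lt (by omega)]
      have hdvdw : a k ∣ (w k a i).1 + (w k a i).2 :=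
        dvd_of_mod_compl (by omega) hilt hmod1 hmod2
      constructor
      · rw [memS'_iff ha0 hmono hk1 hd]
        exact ⟨hdvdw, (omega1_spec hd hgcd i).1,
          (omega2_spec ha0 hmono hk1 hd hgcd (a k - i)).1⟩
      · intro hS
        rw [memS_iff1 ha0 hmono hk1 hd] at hS
        exact absurd hS.2.2 (not_le.mpr hdlt)
  have hinj : Set.InjOn (w k a) (II k a) := by
    intro i hi j hj hij
    have h1 : omega1 k a i = omega1 k a j := congrArg Prod.fst hij
    have m1 := (omega1_spec hd hgcd i).2
    have m2 := (omega1_spec hd hgcd j).2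
    have hmeq : i % a k = j % a k := by rw [← m1, ← m2, h1]
    obtain ⟨hi1, hi2, -, -⟩ := hi
    obtain ⟨hj1, hj2, -, -⟩ := hj
    rw [Nat.mod_eq_of_lt (by omega), Nat.mod_eq_of_lt (by omega)] at hmeq
    exact hmeq
  have hcard : (S' k a \ S k a).ncard = (II k a).ncard := by
    rw [main, Set.ncard_image_of_injOn hinj]
  refine ⟨main, hcard, ?_⟩
  rw [hcard]
  set F : Finset ℕ := Finset.Icc 1 (a k - 1) \ (Finset.Icc 1 (k-1)).image a with hF
  have hsub : II k a ⊆ ↑F := by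
    intro i hi
    obtain ⟨hi1, hi2, hnot, -⟩ := hi
    rw [Finset.mem_coe, hF, Finset.mem_sdiff, Finset.mem_Icc]
    refine ⟨⟨hi1, hi2⟩, ?_⟩
    rw [Finset.mem_image]
    rintro ⟨j, hj, hji⟩
    rw [Finset.mem_Icc] at hj
    exact hnot j hj.1 hj.2 hji.symm
  have hIle : (II k a).ncard ≤ F.card := by
    have := Set.ncard_le_ncard hsub F.finite_toSet
    rwa [Set.ncard_coe_finset] at this
  have himsub : (Finset.Icc 1 (k-1)).image a ⊆ Finset.Icc 1 (a k - 1) := by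
    intro m hm
    simp only [Finset.mem_image, Finset.mem_Icc] at hm ⊢
    obtain ⟨j, ⟨hj1, hj2⟩, rfl⟩ := hm
    have h1 : a 0 < a j := a_lt hmono (by omega) (by omega)
    have h2 : a j < a k := a_lt hmono (by omega) le_rfl
    omega
  have hinj2 : Set.InjOn a ↑(Finset.Icc 1 (k-1)) := by
    intro i hi j hj hij
    simp only [Finset.coe_Icc, Set.mem_Icc] at hi hj
    by_contra hne2
    rcases Nat.lt_or_ge i j with h | h
    · have := a_lt hmono h (by omega)
      omega
    · have := a_lt hmono (show j < i by omega) (by omega)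
      omega
  have hFcard : F.card = (a k - 1) - (k - 1) := by
    rw [hF, Finset.card_sdiff_of_subset himsub, Finset.card_image_of_injOn hinj2,
      Nat.card_Icc, Nat.card_Icc]
    omega
  omega

end ProjMonomialCurve
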